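/- Let n ≥ 2 and let v ∈ ℝⁿ be a unit vector. Suppose u_1, …, u_n ∈ ℝⁿ are unit vectors such that ∑_{j=1}^n a_j u_j = 0 for every a ∈ ℝⁿ with ‖a‖₂ = 1 and ⟨a, v⟩ = 0. Then |v_j| = n^{−1/2} for every j ∈ [n]; that is, v must be a signing scaled by n^{−1/2}. In particular, if v is a unit vector whose coordinates do not all have equal magnitude, then the vector discrepancy of the system of constraints indexed by S^{n−1} ∩ v^⊥ is strictly positive while its spherical discrepancy is zero (witnessed by x = √n·v). -/

import Mathlib

/-- The Euclidean norm of a vector in ℝ^n. -/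
noncomputable def e2 {n : ℕ} (x : Fin n → ℝ) : ℝ := Real.sqrt (∑ j, x j ^ 2)

lemma e2_eq {n : ℕ} (x : Fin n → ℝ) : e2 x = @norm (EuclideanSpace ℝ (Fin n)) _ (WithLp.toLp 2 x) := by
  rw [EuclideanSpace.norm_eq]; simp [e2, sq_abs]

lemma e2_smul {n : ℕ} (c : ℝ) (x : Fin n → ℝ) : e2 (c • x) = |c| * e2 x := by
  rw [e2_eq, e2_eq, ← Real.norm_eq_abs]
  exact @norm_smul ℝ (EuclideanSpace ℝ (Fin n)) _ _ _ _ c (WithLp.toLp 2 x)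

lemma e2_nonneg {n : ℕ} (x : Fin n → ℝ) : 0 ≤ e2 x := Real.sqrt_nonneg _

lemma e2_sub_e2 {n : ℕ} (x y : Fin n → ℝ) : |e2 x - e2 y| ≤ e2 (x - y) := by
  rw [e2_eq, e2_eq, e2_eq]
  exact @abs_norm_sub_norm_le (EuclideanSpace ℝ (Fin n)) _ (WithLp.toLp 2 x) (WithLp.toLp 2 y)

lemma e2_zero_iff {n : ℕ} (x : Fin n → ℝ) : e2 x = 0 ↔ x = 0 := by
  rw [e2_eq]; exact (@norm_eq_zero (EuclideanSpace ℝ (Fin n)) _ (WithLp.toLp 2 x)).trans (WithLp.toLp_eq_zero 2)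

lemma sum_sq_of_e2 {n : ℕ} {x : Fin n → ℝ} (h : e2 x = 1) : ∑ j, x j ^ 2 = 1 := by
  have := Real.sqrt_eq_one.mp h
  simpa using this

lemma e2_of_sum_sq {n : ℕ} {x : Fin n → ℝ} (h : ∑ j, x j ^ 2 = 1) : e2 x = 1 := by
  rw [e2, h, Real.sqrt_one]

lemma coord_le_one {n : ℕ} {x : Fin n → ℝ} (h : e2 x = 1) (l : Fin n) : |x l| ≤ 1 := by
  have h1 : x l ^ 2 ≤ ∑ j, x j ^ 2 :=
    Finset.single_le_sum (f := fun j => x j ^ 2) (fun j _ => sq_nonneg _) (Finset.mem_univ l)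
  rw [sum_sq_of_e2 h] at h1
  nlinarith [sq_abs (x l), abs_nonneg (x l)]

-- the key existence lemma
lemma exist_big {n : ℕ} (hn : 2 ≤ n) (v : Fin n → ℝ) (hv : e2 v = 1)
    {j₀ k₀ : Fin n} (hjk : |v j₀| ≠ |v k₀|)
    (u : Fin n → (Fin n → ℝ)) (hu : ∀ j, e2 (u j) = 1) :
    ∃ a : Fin n → ℝ, e2 a = 1 ∧ (∑ j, a j * v j) = 0 ∧
      abs (|v j₀| - |v k₀|) / (abs (|v j₀| - |v k₀|) + 2) ≤ e2 (fun k => ∑ j, a j * u j k) := by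
  set δ : ℝ := abs (|v j₀| - |v k₀|) with hδdef
  have hδ : 0 < δ := abs_pos.mpr (sub_ne_zero.mpr hjk)
  set ε : ℝ := δ / (δ + 2) with hεdef
  have hε0 : 0 < ε := by positivity
  have hε1 : ε < 1 := by rw [hεdef, div_lt_one (by linarith)]; linarith
  have hεδ : ε * (δ + 2) = δ := by rw [hεdef]; field_simp
  have hv2 : ∑ i, v i ^ 2 = 1 := sum_sq_of_e2 hv
  have hvle : ∀ i, |v i| ≤ 1 := coord_le_one hv
  by_contra hcon
  push_neg at hcon
  -- hcon : ∀ a, e2 a = 1 → ∑ = 0 → e2 (...) < ε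
  -- degenerate case: some coordinate has absolute value 1
  have hdeg : ∀ i₀ i₁ : Fin n, |v i₀| = 1 → i₁ ≠ i₀ → False := by
    intro i₀ i₁ h1 hne
    have hz : v i₁ = 0 := by
      have h2 := Finset.add_sum_erase Finset.univ (fun i => v i ^ 2) (Finset.mem_univ i₀)
      rw [hv2] at h2
      have h3 : v i₁ ^ 2 ≤ ∑ i ∈ Finset.univ.erase i₀, v i ^ 2 :=
        Finset.single_le_sum (f := fun i => v i ^ 2) (fun _ _ => sq_nonneg _)
          (Finset.mem_erase.mpr ⟨hne, Finset.mem_univ _⟩)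
      have h2' : v i₀ ^ 2 + ∑ x ∈ Finset.univ.erase i₀, v x ^ 2 = 1 := h2
      have h4 : v i₀ ^ 2 = 1 := by rw [← sq_abs, h1, one_pow]
      have h5 : v i₁ ^ 2 = 0 := le_antisymm (by linarith) (sq_nonneg _)
      exact pow_eq_zero_iff (by norm_num) |>.mp h5
    set a : Fin n → ℝ := fun l => if l = i₁ then 1 else 0 with ha
    have h1a : e2 a = 1 := by
      apply e2_of_sum_sq
      simp [ha, ite_pow, Finset.sum_ite_eq', Finset.mem_univ]
    have h2a : (∑ j, a j * v j) = 0 := by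
      simp [ha, ite_mul, Finset.sum_ite_eq', Finset.mem_univ, hz]
    have h3a : e2 (fun k => ∑ j, a j * u j k) = 1 := by
      have : (fun k => ∑ j, a j * u j k) = u i₁ := by
        funext k; simp [ha, ite_mul, Finset.sum_ite_eq', Finset.mem_univ]
      rw [this]; exact hu i₁
    have := hcon a h1a h2a
    rw [h3a] at this
    linarith
  rcases eq_or_lt_of_le (hvle j₀) with h1 | hj₀lt
  · have hne : k₀ ≠ j₀ := fun h => hjk (by rw [h])
    exact hdeg j₀ k₀ h1 hne
  rcases eq_or_lt_of_le (hvle k₀) with h1 | hk₀lt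
  · have hne : j₀ ≠ k₀ := fun h => hjk (by rw [h])
    exact hdeg k₀ j₀ h1 hne
  -- main case
  set c : Fin n → ℝ := fun k => ∑ i, v i * u i k with hc
  set C : ℝ := e2 c with hCdef
  have hCnn : 0 ≤ C := e2_nonneg c
  have main : ∀ i : Fin n, |v i| < 1 → |1 - |v i| * C| < ε := by
    intro i hi
    have hs2 : 0 < 1 - v i ^ 2 := by nlinarith [sq_abs (v i), abs_nonneg (v i)]
    set s : ℝ := Real.sqrt (1 - v i ^ 2) with hs
    have hspos : 0 < s := Real.sqrt_pos.mpr hs2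
    have hsle : s ≤ 1 := by
      have := Real.sqrt_le_sqrt (show 1 - v i ^ 2 ≤ 1 by nlinarith [sq_nonneg (v i)])
      rwa [Real.sqrt_one] at this
    set b : Fin n → ℝ := fun l => (if l = i then 1 else 0) - v i * v l with hb
    have hbsq : ∑ l, b l ^ 2 = 1 - v i ^ 2 := by
      have expand : ∀ l, b l ^ 2 =
          ((if l = i then (1:ℝ) else 0) - 2 * (v i * ((if l = i then (1:ℝ) else 0) * v l))
            + v i ^ 2 * v l ^ 2) := by
        intro l; by_cases h : l = i <;> simp [hb, h] <;> ring
      rw [Finset.sum_congr rfl fun l _ => expand l]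
      simp only [Finset.sum_add_distrib, Finset.sum_sub_distrib, Finset.sum_ite_eq',
        Finset.mem_univ, if_true, ← Finset.mul_sum, ite_mul, one_mul, zero_mul]
      rw [hv2]
      ring
    have hbe2 : e2 b = s := by rw [e2, hbsq, hs]
    have h1a : e2 (s⁻¹ • b) = 1 := by
      rw [e2_smul, hbe2, abs_of_pos (by positivity), inv_mul_cancel₀ (ne_of_gt hspos)]
    have h2a : (∑ l, (s⁻¹ • b) l * v l) = 0 := by
      simp only [Pi.smul_apply, smul_eq_mul, mul_assoc, ← Finset.mul_sum]
      have : ∑ l, b l * v l = 0 := by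
        simp only [hb, sub_mul, Finset.sum_sub_distrib, ite_mul, one_mul, zero_mul,
          Finset.sum_ite_eq', Finset.mem_univ, if_true, mul_assoc, ← Finset.mul_sum,
          ← pow_two, hv2, mul_one, sub_self]
      rw [this, mul_zero]
    have hw : (fun k => ∑ l, (s⁻¹ • b) l * u l k) = s⁻¹ • (u i - v i • c) := by
      funext k
      simp only [Pi.smul_apply, smul_eq_mul, Pi.sub_apply, hb, hc, sub_mul,
        Finset.sum_sub_distrib, ite_mul, one_mul, zero_mul, Finset.sum_ite_eq',
        Finset.mem_univ, if_true, mul_assoc, ← Finset.mul_sum]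
    have hlt := hcon _ h1a h2a
    rw [hw, e2_smul] at hlt
    have hinv : 1 ≤ |s⁻¹| := by
      rw [abs_of_pos (by positivity)]
      exact (one_le_inv₀ hspos).mpr hsle
    have hlt2 : e2 (u i - v i • c) < ε := by
      nlinarith [e2_nonneg (u i - v i • c)]
    have htri := e2_sub_e2 (u i) (v i • c)
    rw [hu i, e2_smul, ← hCdef] at htri
    exact lt_of_le_of_lt htri hlt2
  have hj := main j₀ hj₀lt
  have hk := main k₀ hk₀lt
  -- arithmetic contradiction
  obtain ⟨hA1, hA2⟩ := abs_lt.mp hj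
  obtain ⟨hB1, hB2⟩ := abs_lt.mp hk
  have hCgt : 1 - ε < C := by nlinarith [abs_nonneg (v j₀), hvle j₀]
  have hδC : δ * C < 2 * ε := by
    rcases abs_cases (|v j₀| - |v k₀|) with ⟨h, -⟩ | ⟨h, -⟩ <;>
      [rw [← hδdef] at h; rw [← hδdef] at h] <;> nlinarith
  nlinarith

lemma part1 {n : ℕ} (hn : 2 ≤ n) (v : Fin n → ℝ) (hv : e2 v = 1)
    (u : Fin n → (Fin n → ℝ)) (hu : ∀ j, e2 (u j) = 1)
    (hann : ∀ a : Fin n → ℝ, e2 a = 1 → (∑ j, a j * v j) = 0 →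
        ∀ k, (∑ j, a j * u j k) = 0)
    (j : Fin n) : |v j| = 1 / Real.sqrt n := by
  have hv2 : ∑ i, v i ^ 2 = 1 := sum_sq_of_e2 hv
  -- extend annihilation to all orthogonal vectors
  have hann' : ∀ a : Fin n → ℝ, (∑ j, a j * v j) = 0 → ∀ k, (∑ j, a j * u j k) = 0 := by
    intro a hav k
    by_cases ha : a = 0
    · simp [ha]
    · have hs : e2 a ≠ 0 := fun h => ha ((e2_zero_iff a).mp h)
      have hs' : (0:ℝ) < e2 a := lt_of_le_of_ne (e2_nonneg a) (Ne.symm hs)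
      have h1 : e2 ((e2 a)⁻¹ • a) = 1 := by
        rw [e2_smul, abs_of_pos (by positivity), inv_mul_cancel₀ hs]
      have h2 : (∑ i, ((e2 a)⁻¹ • a) i * v i) = 0 := by
        simp only [Pi.smul_apply, smul_eq_mul, mul_assoc, ← Finset.mul_sum, hav, mul_zero]
      have := hann _ h1 h2 k
      simp only [Pi.smul_apply, smul_eq_mul, mul_assoc, ← Finset.mul_sum] at this
      rcases mul_eq_zero.mp this with h | h
      · exact absurd h (inv_ne_zero hs)
      · exact h
  set c : Fin n → ℝ := fun k => ∑ i, v i * u i k with hc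
  have key : ∀ i k, u i k = v i * c k := by
    intro i k
    have hav : (∑ l, (fun l => (if l = i then (1:ℝ) else 0) - v i * v l) l * v l) = 0 := by
      simp only [sub_mul, Finset.sum_sub_distrib, ite_mul, one_mul, zero_mul,
        Finset.sum_ite_eq', Finset.mem_univ, if_true, mul_assoc,
        ← Finset.mul_sum, ← pow_two, hv2, mul_one, sub_self]
    have := hann' _ hav k
    simp only [sub_mul, Finset.sum_sub_distrib, ite_mul, one_mul, zero_mul,
      Finset.sum_ite_eq', Finset.mem_univ, if_true, mul_assoc,
      ← Finset.mul_sum, sub_eq_zero] at this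
    exact this
  set C : ℝ := ∑ k, c k ^ 2 with hC
  have hunit : ∀ i, v i ^ 2 * C = 1 := by
    intro i
    have := sum_sq_of_e2 (hu i)
    calc v i ^ 2 * C = ∑ k, (v i * c k) ^ 2 := by
          rw [Finset.mul_sum]; exact Finset.sum_congr rfl fun k _ => by ring
      _ = 1 := by rw [← this]; exact Finset.sum_congr rfl fun k _ => by rw [← key]
  have hCn : C = n := by
    have h1 : ∑ i : Fin n, v i ^ 2 * C = n := by
      simp [hunit]
    rw [← Finset.sum_mul, hv2, one_mul] at h1
    exact h1
  have hnpos : (0:ℝ) < n := by positivity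
  have hvj : v j ^ 2 = 1 / n := by
    have := hunit j
    rw [hCn] at this
    field_simp at this ⊢
    linarith
  rw [← Real.sqrt_sq_eq_abs, hvj, one_div, Real.sqrt_inv, inv_eq_one_div]


theorem stmt_9 {n : ℕ} (hn : 2 ≤ n) (v : Fin n → ℝ) (hv : e2 v = 1) :
    -- main claim: any family of unit vectors annihilating all unit vectors orthogonal
    -- to v forces |v_j| = n^{-1/2} for every j
    (∀ u : Fin n → (Fin n → ℝ), (∀ j, e2 (u j) = 1) →
      (∀ a : Fin n → ℝ, e2 a = 1 → (∑ j, a j * v j) = 0 →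
        ∀ k, (∑ j, a j * u j k) = 0) →
      ∀ j, |v j| = 1 / Real.sqrt n) ∧
    -- in particular, if the coordinates of v do not all have equal magnitude, then the
    -- vector discrepancy of the family S^{n-1} ∩ v^⊥ is strictly positive ...
    ((∃ j k : Fin n, |v j| ≠ |v k|) →
      0 < sInf { d | ∃ u : Fin n → (Fin n → ℝ), (∀ j, e2 (u j) = 1) ∧
        d = ⨆ a : { a : Fin n → ℝ // e2 a = 1 ∧ (∑ j, a j * v j) = 0 },
              e2 (fun k => ∑ j, a.1 j * u j k) }) ∧
    -- ... while its spherical discrepancy is zero, witnessed by x = √n · v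
    (e2 (Real.sqrt n • v) = Real.sqrt n ∧
      ∀ a : Fin n → ℝ, e2 a = 1 → (∑ j, a j * v j) = 0 →
        |∑ j, a j * (Real.sqrt n • v) j| = 0) := by
  refine ⟨part1 hn v hv, ?_, ?_, ?_⟩
  · rintro ⟨j₀, k₀, hjk⟩
    set ε : ℝ := abs (|v j₀| - |v k₀|) / (abs (|v j₀| - |v k₀|) + 2) with hεdef
    have hδ : 0 < abs (|v j₀| - |v k₀|) := abs_pos.mpr (sub_ne_zero.mpr hjk)
    have hε0 : 0 < ε := by positivity
    set u₀ : Fin n → (Fin n → ℝ) := fun _ => fun k => if k = ⟨0, by omega⟩ then 1 else 0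
      with hu₀def
    have hu₀ : ∀ j, e2 (u₀ j) = 1 := by
      intro j
      apply e2_of_sum_sq
      simp [hu₀def, ite_pow, Finset.sum_ite_eq', Finset.mem_univ]
    refine lt_of_lt_of_le hε0 (le_csInf ⟨_, u₀, hu₀, rfl⟩ ?_)
    rintro d ⟨u, hu, rfl⟩
    -- an upper bound for the supremand
    have hbdd : BddAbove (Set.range fun a : { a : Fin n → ℝ // e2 a = 1 ∧
        (∑ j, a j * v j) = 0 } => e2 (fun k => ∑ j, a.1 j * u j k)) := by
      refine ⟨Real.sqrt (∑ _k : Fin n, (n : ℝ) ^ 2), ?_⟩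
      rintro x ⟨a, rfl⟩
      apply Real.sqrt_le_sqrt
      apply Finset.sum_le_sum
      intro k _
      have habs : |∑ j, a.1 j * u j k| ≤ (n : ℝ) := by
        calc |∑ j, a.1 j * u j k| ≤ ∑ j, |a.1 j * u j k| := Finset.abs_sum_le_sum_abs _ _
          _ ≤ ∑ _j : Fin n, (1 : ℝ) := by
              apply Finset.sum_le_sum
              intro j _
              rw [abs_mul]
              exact mul_le_one₀ (coord_le_one a.2.1 j) (abs_nonneg _)
                (coord_le_one (hu j) k)
          _ = (n : ℝ) := by simp
      calc (∑ j, a.1 j * u j k) ^ 2 = |∑ j, a.1 j * u j k| ^ 2 := (sq_abs _).symm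
        _ ≤ (n : ℝ) ^ 2 := by
            apply pow_le_pow_left₀ (abs_nonneg _) habs
    obtain ⟨a, ha1, ha2, ha3⟩ := exist_big hn v hv hjk u hu
    exact le_ciSup_of_le hbdd ⟨a, ha1, ha2⟩ ha3
  · rw [e2_smul, hv, mul_one, abs_of_nonneg (Real.sqrt_nonneg _)]
  · intro a ha hav
    have : ∑ j, a j * (Real.sqrt n • v) j = Real.sqrt n * ∑ j, a j * v j := by
      rw [Finset.mul_sum]
      exact Finset.sum_congr rfl fun j _ => by simp [Pi.smul_apply, smul_eq_mul]; ring
    rw [this, hav, mul_zero, abs_zero]
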